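/- Let (R, m) be a Cohen-Macaulay local ring of dimension one whose integral closure R̄ in the total quotient ring Q(R) is a discrete valuation ring with maximal ideal n, such that R̄ is a finitely generated R-module and the natural map R/m → R̄/n is an isomorphism. Let I be a regular ideal of R and let b ∈ I with v(b) = v(I), where v is the normalized valuation associated to R̄. Then the principal ideal (b) is a reduction of I. -/

import Mathlib

set_option synthInstance.maxHeartbeats 1000000
set_option maxHeartbeats 4000000

/-- Supremum of lengths of strictly increasing finite chains in a preorder. -/
noncomputable def chainLen (α : Type*) [Preorder α] : ℕ∞ :=
  ⨆ s : RelSeries {(a, b) : α × α | a < b}, (s.length : ℕ∞)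

/-- The `R̄`-submodule of `Q(R)` generated by a set, where `R̄` is the integral closure of
`R` in its total quotient ring `Q(R) = FractionRing R`. -/
noncomputable def sbm (R : Type*) [CommRing R] (s : Set (FractionRing R)) :
    Submodule ↥(integralClosure R (FractionRing R)) (FractionRing R) :=
  Submodule.span ↥(integralClosure R (FractionRing R)) s

/-- The length over `R̄` of the subquotient `(R̄-span of O)/(R̄-span of A)`, computed as the
longest chain of `R̄`-submodules between the two spans. -/
noncomputable def relLen (R : Type*) [CommRing R] (O A : Set (FractionRing R)) : ℕ∞ :=
  chainLen ↥(Set.Icc (sbm R A) (sbm R O))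

/-- The normalized valuation `v : Q(R) → ℤ ∪ {∞}` associated to `R̄`:
`v(α) = ℓ_{R̄}((R̄ + R̄α)/R̄α) − ℓ_{R̄}((R̄ + R̄α)/R̄)`.  When `R̄` is a discrete valuation
ring, this agrees with `v(a/b) = ℓ_{R̄}(R̄/aR̄) − ℓ_{R̄}(R̄/bR̄)`. -/
noncomputable def vVal (R : Type*) [CommRing R] (α : FractionRing R) : WithTop ℤ :=
  (relLen R {1, α} {α}).map (Nat.cast : ℕ → ℤ) - (relLen R {1, α} {1}).map (Nat.cast : ℕ → ℤ)

lemma chainLen_subsingleton (α : Type*) [Preorder α] [Subsingleton α] : chainLen α = 0 := by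
  refine le_antisymm (iSup_le fun s => ?_) zero_le
  rcases Nat.eq_zero_or_pos s.length with h | h
  · simp [h]
  · exact absurd (Subsingleton.elim _ _) (ne_of_lt (s.step ⟨0, h⟩))

lemma chainLen_Icc_self {α : Type*} [PartialOrder α] (a : α) :
    chainLen ↥(Set.Icc a a) = 0 := by
  haveI : Subsingleton ↥(Set.Icc a a) :=
    ⟨fun x y => Subtype.ext ((le_antisymm x.2.2 x.2.1).trans (le_antisymm y.2.2 y.2.1).symm)⟩
  exact chainLen_subsingleton _

lemma chainLen_ne_top (α : Type*) [Preorder α] [Finite α] : chainLen α ≠ ⊤ := by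
  refine ne_top_of_le_ne_top (ENat.coe_ne_top (Nat.card α)) (iSup_le fun s => ?_)
  have h1 : Nat.card (Fin (s.length + 1)) ≤ Nat.card α :=
    Nat.card_le_card_of_injective s.toFun (LTSeries.strictMono s).injective
  simp only [Nat.card_eq_fintype_card, Fintype.card_fin] at h1
  exact_mod_cast Nat.le_of_succ_le h1

lemma chainLen_add_one_le {α : Type*} [Preorder α] {A A' B : α} (h1 : A < A') (h2 : A' ≤ B) :
    chainLen ↥(Set.Icc A' B) + 1 ≤ chainLen ↥(Set.Icc A B) := by
  haveI : Nonempty (RelSeries {(a, b) : ↥(Set.Icc A' B) × ↥(Set.Icc A' B) | a < b}) :=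
    ⟨RelSeries.singleton _ ⟨A', le_refl A', h2⟩⟩
  rw [chainLen, ENat.iSup_add]
  refine iSup_le fun s => ?_
  let f : ↥(Set.Icc A' B) → ↥(Set.Icc A B) :=
    fun x => ⟨x.1, le_trans h1.le x.2.1, x.2.2⟩
  have hf : ∀ {x y : ↥(Set.Icc A' B)}, x < y → f x < f y := fun h => h
  let s' := s.map (s := {(a, b) : ↥(Set.Icc A B) × ↥(Set.Icc A B) | a < b}) ⟨f, fun h => hf h⟩
  have hhead : (⟨A, le_refl A, le_trans h1.le (le_trans s.head.2.1 s.head.2.2)⟩ :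
      ↥(Set.Icc A B)) < s'.head := by
    show (⟨A, _⟩ : ↥(Set.Icc A B)) < f s.head
    exact Subtype.mk_lt_mk.mpr (lt_of_lt_of_le h1 s.head.2.1)
  let s'' := s'.cons _ hhead
  have hlen : s''.length = s.length + 1 := by
    simp [s'', s']
  calc ((s.length : ℕ∞) + 1) = (s''.length : ℕ∞) := by rw [hlen]; push_cast; ring
  _ ≤ _ := le_iSup (fun t : RelSeries {(a, b) : ↥(Set.Icc A B) × ↥(Set.Icc A B) | a < b} =>
      (t.length : ℕ∞)) s''

lemma finite_Icc_span {S K : Type*} [CommRing S] [IsDomain S] [IsDiscreteValuationRing S]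
    [CommRing K] [Algebra S K] {r : S} (hr : r ≠ 0) {ξ : K} (hrξ : algebraMap S K r = ξ) :
    Finite ↥(Set.Icc (Submodule.span S {ξ}) (Submodule.span S {(1 : K)})) := by
  obtain ⟨ϖ, hϖ⟩ := IsDiscreteValuationRing.exists_irreducible S
  obtain ⟨m, u, hu⟩ := IsDiscreteValuationRing.eq_unit_mul_pow_irreducible hr hϖ
  have hfin : Set.Finite {J : Ideal S | r ∈ J} := by
    apply Set.Finite.subset (Set.Finite.image (fun n => Ideal.span {ϖ ^ n}) (Set.finite_Iic m))
    intro J hJ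
    have hJne : J ≠ ⊥ := by
      rintro rfl; exact hr (Ideal.mem_bot.mp hJ)
    obtain ⟨n, hn⟩ := IsDiscreteValuationRing.ideal_eq_span_pow_irreducible hJne hϖ
    refine ⟨n, ?_, hn.symm⟩
    have hd : ϖ ^ n ∣ r := Ideal.mem_span_singleton.mp (hn ▸ hJ)
    rw [hu] at hd
    have hd2 : ϖ ^ n ∣ ϖ ^ m := (Units.dvd_mul_left).mp hd
    exact Set.mem_Iic.mpr ((pow_dvd_pow_iff hϖ.ne_zero hϖ.not_isUnit).mp hd2)
  haveI := hfin.to_subtype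
  set φ := Algebra.linearMap S K with hφ
  have hrange : LinearMap.range φ = Submodule.span S {(1 : K)} := by
    ext y
    simp only [LinearMap.mem_range, Submodule.mem_span_singleton, Algebra.smul_def, mul_one,
      hφ, Algebra.linearMap_apply]
  have hmc : ∀ N : Submodule S K, N ≤ Submodule.span S {(1 : K)} →
      Submodule.map φ (Submodule.comap φ N) = N := by
    intro N hN
    rw [Submodule.map_comap_eq, hrange]
    exact inf_eq_right.mpr hN
  have hg : ∀ N : ↥(Set.Icc (Submodule.span S {ξ}) (Submodule.span S {(1 : K)})),
      r ∈ Submodule.comap φ N.1 := by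
    intro N
    have : ξ ∈ N.1 := N.2.1 (Submodule.mem_span_singleton_self ξ)
    simpa [hφ, Algebra.linearMap_apply, hrξ] using this
  refine Finite.of_injective
    (fun N : ↥(Set.Icc (Submodule.span S {ξ}) (Submodule.span S {(1 : K)})) =>
      (⟨Submodule.comap φ N.1, hg N⟩ : ↥{J : Ideal S | r ∈ J})) ?_
  intro a b h
  apply Subtype.ext
  have h' : Submodule.comap φ a.1 = Submodule.comap φ b.1 := congrArg Subtype.val h
  rw [← hmc a.1 a.2.2, ← hmc b.1 b.2.2, h']

lemma vVal_eq (R : Type*) [CommRing R] [IsDomain R] (r : R) :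
    vVal R (algebraMap R (FractionRing R) r) =
      (chainLen ↥(Set.Icc (sbm R {algebraMap R (FractionRing R) r})
        (sbm R {(1 : FractionRing R)}))).map (Nat.cast : ℕ → ℤ) := by
  have hmem : algebraMap R (FractionRing R) r ∈ sbm R {(1 : FractionRing R)} := by
    refine Submodule.mem_span_singleton.mpr
      ⟨⟨algebraMap R (FractionRing R) r, isIntegral_algebraMap⟩, ?_⟩
    simp [Algebra.smul_def, Subalgebra.algebraMap_eq]
  have hins : sbm R {1, algebraMap R (FractionRing R) r} = sbm R {(1 : FractionRing R)} := by
    refine le_antisymm (Submodule.span_le.mpr ?_) (Submodule.span_mono ?_)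
    · rintro y hy
      rcases Set.mem_insert_iff.mp hy with rfl | hy
      · exact Submodule.mem_span_singleton_self _
      · rw [Set.mem_singleton_iff] at hy; subst hy; exact hmem
    · intro y hy
      rw [Set.mem_singleton_iff] at hy; subst hy
      exact Set.mem_insert _ _
  rw [vVal, relLen, relLen, hins, chainLen_Icc_self]
  simp

lemma key_dvd (R : Type*) [CommRing R] [IsDomain R]
    [IsDiscreteValuationRing ↥(integralClosure R (FractionRing R))]
    (I : Ideal R) (b : R)
    (hv : ∀ x ∈ I, vVal R (algebraMap R (FractionRing R) b) ≤
      vVal R (algebraMap R (FractionRing R) x)) :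
    ∀ x ∈ I, ∃ c : ↥(integralClosure R (FractionRing R)),
      algebraMap R (FractionRing R) x = algebraMap R (FractionRing R) b * c := by
  intro x hx
  by_cases hx0 : algebraMap R (FractionRing R) x = 0
  · exact ⟨0, by simp [hx0]⟩
  by_contra hcon
  push_neg at hcon
  set ξ := algebraMap R (FractionRing R) x with hξdef
  set β := algebraMap R (FractionRing R) b with hβdef
  set x' : ↥(integralClosure R (FractionRing R)) := ⟨ξ, isIntegral_algebraMap⟩ with hx'def
  set b' : ↥(integralClosure R (FractionRing R)) := ⟨β, isIntegral_algebraMap⟩ with hb'def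
  have hndvd : ¬ b' ∣ x' := by
    rintro ⟨c, hc⟩
    refine hcon c ?_
    have := congrArg Subtype.val hc
    simpa [hx'def, hb'def] using this
  have hdvd : x' ∣ b' := (ValuationRing.dvd_total b' x').resolve_left hndvd
  obtain ⟨c, hc⟩ := hdvd
  have hcK : β = ξ * (c : FractionRing R) := by
    have := congrArg Subtype.val hc
    simpa [hx'def, hb'def] using this
  have hlt : sbm R {β} < sbm R {ξ} := by
    refine lt_of_le_of_ne ?_ ?_
    · refine Submodule.span_le.mpr ?_
      rintro y hy
      rw [Set.mem_singleton_iff] at hy; subst hy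
      refine Submodule.mem_span_singleton.mpr ⟨c, ?_⟩
      show (c : FractionRing R) * ξ = β
      rw [hcK]; ring
    · intro heq
      have hmem : ξ ∈ sbm R {β} := heq ▸ Submodule.mem_span_singleton_self ξ
      obtain ⟨a, ha⟩ := Submodule.mem_span_singleton.mp hmem
      refine hndvd ⟨a, ?_⟩
      apply Subtype.val_injective
      have ha' : (a : FractionRing R) * β = ξ := ha
      show ξ = β * (a : FractionRing R)
      rw [← ha']; ring
  have hle2 : sbm R {ξ} ≤ sbm R {(1 : FractionRing R)} := by
    refine Submodule.span_le.mpr ?_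
    rintro y hy
    rw [Set.mem_singleton_iff] at hy; subst hy
    refine Submodule.mem_span_singleton.mpr ⟨x', ?_⟩
    show (x' : FractionRing R) * 1 = ξ
    simp [hx'def]
  haveI hfin : Finite ↥(Set.Icc (sbm R {ξ}) (sbm R {(1 : FractionRing R)})) := by
    refine finite_Icc_span (r := x') ?_ ?_
    · intro h
      exact hx0 (by simpa [hx'def] using congrArg Subtype.val h)
    · rfl
  have hvle := hv x hx
  rw [vVal_eq, vVal_eq] at hvle
  have hle3 : chainLen ↥(Set.Icc (sbm R {β}) (sbm R {(1 : FractionRing R)})) ≤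
      chainLen ↥(Set.Icc (sbm R {ξ}) (sbm R {(1 : FractionRing R)})) :=
    (WithTop.map_le_iff _ (fun {a b} => Int.ofNat_le)).mp hvle
  have hup := chainLen_add_one_le hlt hle2
  have hne := chainLen_ne_top ↥(Set.Icc (sbm R {ξ}) (sbm R {(1 : FractionRing R)}))
  exact lt_irrefl _ ((ENat.add_one_le_iff hne).mp (le_trans hup hle3))


open Pointwise in
/-- Let `(R, m)` be a one-dimensional Cohen-Macaulay local ring whose
integral closure `R̄` in `Q(R)` is a DVR with maximal ideal `n`, finitely generated as an
`R`-module, with `R/m ≅ R̄/n`.  If `I` is a regular ideal and `b ∈ I` has `v(b) = v(I)`,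
then `(b)` is a reduction of `I`. -/
theorem stmt11 (R : Type*) [CommRing R] [IsDomain R] [IsNoetherianRing R] [IsLocalRing R]
    (hdim : ringKrullDim R = 1)
    (hdepth : ∃ x ∈ IsLocalRing.maximalIdeal R, x ∈ nonZeroDivisors R)
    [IsDiscreteValuationRing ↥(integralClosure R (FractionRing R))]
    [Module.Finite R ↥(integralClosure R (FractionRing R))]
    -- the natural map `R/m → R̄/n` is an isomorphism:
    (hres1 : ∀ r : R,
      algebraMap R ↥(integralClosure R (FractionRing R)) r ∈
          IsLocalRing.maximalIdeal ↥(integralClosure R (FractionRing R)) ↔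
        r ∈ IsLocalRing.maximalIdeal R)
    (hres2 : ∀ y : ↥(integralClosure R (FractionRing R)), ∃ r : R,
      algebraMap R ↥(integralClosure R (FractionRing R)) r - y ∈
        IsLocalRing.maximalIdeal ↥(integralClosure R (FractionRing R)))
    (I : Ideal R) (hreg : ∃ x ∈ I, x ∈ nonZeroDivisors R)
    (b : R) (hbI : b ∈ I)
    -- `v(b) = v(I)`, i.e. `b` attains the minimal valuation on `I`:
    (hv : ∀ x ∈ I, vVal R (algebraMap R (FractionRing R) b) ≤
      vVal R (algebraMap R (FractionRing R) x)) :
    ∃ n : ℕ, 0 < n ∧ I ^ (n + 1) = Ideal.span {b} * I ^ n := by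
  obtain ⟨x0, hx0I, hx0r⟩ := hreg
  have key := key_dvd R I b hv
  have hinjK : Function.Injective (algebraMap R (FractionRing R)) :=
    IsFractionRing.injective R (FractionRing R)
  have hb0 : b ≠ 0 := by
    rintro rfl
    obtain ⟨c, hc⟩ := key x0 hx0I
    rw [map_zero, zero_mul] at hc
    exact nonZeroDivisors.ne_zero hx0r (hinjK (by simpa using hc))
  set β := algebraMap R (FractionRing R) b with hβdef
  have hβ0 : β ≠ 0 := fun h => hb0 (hinjK (by rw [map_zero]; exact h))
  set sI : Set (FractionRing R) := (algebraMap R (FractionRing R)) '' (I : Set R) with hsIdef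
  set M : ℕ → Submodule R (FractionRing R) :=
    fun n => Submodule.span R ({(β⁻¹) ^ n} * sI ^ n) with hMdef
  -- monotone
  have hmono : ∀ n, M n ≤ M (n + 1) := by
    intro n
    apply Submodule.span_mono
    rintro y hy
    obtain ⟨a, ha, p, hp, rfl⟩ := Set.mem_mul.mp hy
    rw [Set.mem_singleton_iff] at ha; subst ha
    refine Set.mem_mul.mpr ⟨(β⁻¹) ^ (n + 1), rfl, β * p, ?_, ?_⟩
    · rw [pow_succ']
      exact Set.mul_mem_mul ⟨b, hbI, rfl⟩ hp
    · rw [pow_succ]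
      field_simp
  -- bounded by integral closure
  have hS : ∀ n, ∀ p ∈ sI ^ n, (β⁻¹) ^ n * p ∈ integralClosure R (FractionRing R) := by
    intro n
    induction n with
    | zero =>
      intro p hp
      rw [pow_zero, Set.mem_one] at hp; subst hp
      simpa using one_mem (integralClosure R (FractionRing R))
    | succ n ih =>
      intro p hp
      rw [pow_succ'] at hp
      obtain ⟨q, hq, p', hp', rfl⟩ := Set.mem_mul.mp hp
      obtain ⟨xq, hxqI, rfl⟩ := hq
      obtain ⟨c, hc⟩ := key xq hxqI
      have heq : (β⁻¹) ^ (n + 1) * (algebraMap R (FractionRing R) xq * p') =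
          (c : FractionRing R) * ((β⁻¹) ^ n * p') := by
        rw [hc, pow_succ]
        field_simp
      rw [heq]
      exact mul_mem c.2 (ih p' hp')
  set T := Subalgebra.toSubmodule (integralClosure R (FractionRing R)) with hTdef
  have hleT : ∀ n, M n ≤ T := by
    intro n
    apply Submodule.span_le.mpr
    rintro y hy
    obtain ⟨a, ha, p, hp, rfl⟩ := Set.mem_mul.mp hy
    rw [Set.mem_singleton_iff] at ha; subst ha
    simpa [hTdef] using hS n p hp
  -- Noetherian stabilization
  have hTfg : T.FG := by
    have h2 : T = LinearMap.range
        ((integralClosure R (FractionRing R)).val.toLinearMap) := by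
      ext y
      constructor
      · intro hy; exact ⟨⟨y, hy⟩, rfl⟩
      · rintro ⟨s, rfl⟩; exact s.2
    rw [h2, LinearMap.range_eq_map]
    exact (Module.finite_def.mp inferInstance).map _
  haveI hNoeT : IsNoetherian R ↥T := isNoetherian_of_fg_of_noetherian T hTfg
  have hMmono : Monotone M := monotone_nat_of_le_succ hmono
  obtain ⟨n, hn⟩ := monotone_stabilizes_iff_noetherian.mpr hNoeT
    ⟨fun k => Submodule.comap T.subtype (M k),
     fun k l hkl => Submodule.comap_mono (hMmono hkl)⟩
  have hstab : M (n + 1) = M (n + 2) := by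
    have e1 := hn (n + 1) (Nat.le_succ n)
    have e2 := hn (n + 2) (by omega)
    have e : Submodule.comap T.subtype (M (n + 1)) = Submodule.comap T.subtype (M (n + 2)) :=
      e1.symm.trans e2
    have := congrArg (Submodule.map T.subtype) e
    rwa [Submodule.map_comap_subtype, Submodule.map_comap_subtype,
      inf_eq_right.mpr (hleT (n + 1)), inf_eq_right.mpr (hleT (n + 2))] at this
  refine ⟨n + 1, Nat.succ_pos n, le_antisymm ?_ ?_⟩
  · intro x hx
    have h1 : algebraMap R (FractionRing R) x ∈ Submodule.span R (sI ^ (n + 2)) := by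
      have hx' : x ∈ Submodule.span R ((I : Set R) ^ (n + 2)) := by
        rw [← Submodule.pow_eq_span_pow_set]; exact hx
      have hmm := Submodule.mem_map_of_mem (f := Algebra.linearMap R (FractionRing R)) hx'
      rw [Submodule.map_span] at hmm
      have himg : ⇑(Algebra.linearMap R (FractionRing R)) '' ((I : Set R) ^ (n + 2)) =
          sI ^ (n + 2) := by
        rw [show ⇑(Algebra.linearMap R (FractionRing R)) =
          ⇑(algebraMap R (FractionRing R)) from rfl, Set.image_pow]
      rwa [himg] at hmm
    have hspanmap : ∀ (a : FractionRing R) (s : Set (FractionRing R)),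
        Submodule.span R ({a} * s) =
          Submodule.map (LinearMap.mulLeft R a) (Submodule.span R s) := by
      intro a s
      rw [Submodule.map_span]
      congr 1
      rw [Set.singleton_mul]
      rfl
    have h2 : (β⁻¹) ^ (n + 2) * algebraMap R (FractionRing R) x ∈ M (n + 2) := by
      rw [hMdef]
      simp only []
      rw [hspanmap]
      exact ⟨_, h1, rfl⟩
    rw [← hstab, hMdef] at h2
    simp only [] at h2
    rw [hspanmap] at h2
    obtain ⟨y, hy, hy2⟩ := h2
    have hy2' : (β⁻¹) ^ (n + 1) * y = (β⁻¹) ^ (n + 2) * algebraMap R (FractionRing R) x := hy2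
    have hβinv : (β⁻¹) ^ (n + 1) ≠ 0 := pow_ne_zero _ (inv_ne_zero hβ0)
    have hyval : y = β⁻¹ * algebraMap R (FractionRing R) x := by
      refine mul_left_cancel₀ hβinv ?_
      rw [hy2', pow_succ]; ring
    have h3 : algebraMap R (FractionRing R) x ∈ Submodule.span R ({β} * sI ^ (n + 1)) := by
      rw [hspanmap]
      refine ⟨y, hy, ?_⟩
      show β * y = algebraMap R (FractionRing R) x
      rw [hyval]
      field_simp
    have heq : Ideal.span {b} * I ^ (n + 1) = Ideal.span ({b} * (I : Set R) ^ (n + 1)) := by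
      rw [Submodule.pow_eq_span_pow_set]
      exact Submodule.span_mul_span R {b} ((I : Set R) ^ (n + 1))
    have himg2 : ⇑(Algebra.linearMap R (FractionRing R)) '' ({b} * (I : Set R) ^ (n + 1)) =
        {β} * sI ^ (n + 1) := by
      rw [show ⇑(Algebra.linearMap R (FractionRing R)) =
        ⇑(algebraMap R (FractionRing R)) from rfl, Set.image_mul, Set.image_singleton,
        Set.image_pow]
    have h4 : algebraMap R (FractionRing R) x ∈
        Submodule.map (Algebra.linearMap R (FractionRing R))
          (Submodule.span R ({b} * (I : Set R) ^ (n + 1))) := by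
      rw [Submodule.map_span, himg2]
      exact h3
    obtain ⟨y', hy', hyx⟩ := h4
    have hyx' : algebraMap R (FractionRing R) y' = algebraMap R (FractionRing R) x := hyx
    have hy'x : y' = x := hinjK hyx'
    rw [heq]
    exact hy'x ▸ hy'
  · calc Ideal.span {b} * I ^ (n + 1) ≤ I * I ^ (n + 1) :=
      mul_le_mul' (Ideal.span_le.mpr (Set.singleton_subset_iff.mpr hbI)) le_rfl
    _ = I ^ (n + 2) := (pow_succ' I (n + 1)).symm
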